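/- Suppose the boundary value problem −r(x)y′(x)+q(x)y(x)=f(x), lim_{|x|→∞} y(x)=0, is correctly solvable in L₁(ℝ), and set r₀ = inf_{x∈ℝ} r(x). Then for every f ∈ L₁(ℝ) the solution y satisfies ‖y′‖_{L₁} + ‖(q/r)·y‖_{L₁} ≤ (3/r₀)‖f‖_{L₁}. -/

import Mathlib

open MeasureTheory Filter Set Real
open scoped ENNReal NNReal

noncomputable section

/-- `y` is a solution of the boundary value problem `-r·y' + q·y = f` on `ℝ` with
`y → 0` at `±∞`: `y` is continuous, locally absolutely continuous (encoded through the
integral identity, i.e. `y` is the integral of its a.e. derivative `(q·y - f)/r`),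
and tends to `0` at both infinities. -/
def IsSolution (r q f y : ℝ → ℝ) : Prop :=
  Continuous y ∧
  (∀ a b : ℝ, y b - y a = ∫ t in a..b, (q t * y t - f t) / r t) ∧
  Tendsto y atBot (nhds 0) ∧ Tendsto y atTop (nhds 0)

/-- Correct solvability of the problem `-r·y' + q·y = f`, `y(±∞) = 0`, in `L_p(ℝ)`:
for every `f ∈ L_p(ℝ)` there is a unique solution `y ∈ L_p(ℝ)`, and the solution
satisfies `‖y‖_p ≤ c‖f‖_p` with a constant `c ∈ (0,∞)` independent of `f`. -/
def CorrectlySolvableLp (r q : ℝ → ℝ) (p : ℝ≥0∞) : Prop :=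
  ∃ c : ℝ≥0∞, 0 < c ∧ c < ⊤ ∧
    ∀ f : ℝ → ℝ, MemLp f p volume →
      (∃! y : ℝ → ℝ, IsSolution r q f y ∧ MemLp y p volume) ∧
      ∀ y : ℝ → ℝ, IsSolution r q f y → MemLp y p volume →
        eLpNorm y p volume ≤ c * eLpNorm f p volume

namespace Stmt9Aux

variable {r q f y : ℝ → ℝ}

lemma intInt_mul_cont (hq : LocallyIntegrable q volume) {g : ℝ → ℝ} (hg : Continuous g)
    (a b : ℝ) : IntervalIntegrable (fun t => q t * g t) volume a b :=
  ((hq.integrableOn_isCompact isCompact_uIcc).mul_continuousOn hg.continuousOn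
    isCompact_uIcc).intervalIntegrable

lemma intInt_int_mul_cont (hf : Integrable f volume) {g : ℝ → ℝ} (hg : Continuous g)
    (a b : ℝ) : IntervalIntegrable (fun t => f t * g t) volume a b :=
  ((hf.integrableOn.mul_continuousOn hg.continuousOn isCompact_uIcc)).intervalIntegrable

lemma identity_split (hr : Continuous r) (hrpos : ∀ x, 0 < r x)
    (hq : LocallyIntegrable q volume) (hy : Continuous y) (hf : Integrable f volume)
    (hid : ∀ a b : ℝ, y b - y a = ∫ t in a..b, (q t * y t - f t) / r t) (a b : ℝ) :
    y b - y a = (∫ t in a..b, q t * (y t / r t)) - ∫ t in a..b, f t * (r t)⁻¹ := by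
  have hrne : ∀ x : ℝ, r x ≠ 0 := fun x => (hrpos x).ne'
  have hyr : Continuous fun t => y t / r t := by exact hy.div hr hrne
  rw [hid a b,
    ← intervalIntegral.integral_sub (intInt_mul_cont hq hyr a b)
      (intInt_int_mul_cont hf (g := fun t => (r t)⁻¹) (hr.inv₀ hrne) a b)]
  apply intervalIntegral.integral_congr
  intro t _
  show (q t * y t - f t) / r t = q t * (y t / r t) - f t * (r t)⁻¹
  rw [sub_div, mul_div_assoc, div_eq_mul_inv (f t) (r t)]

lemma delta_choice (hr : Continuous r) (hrpos : ∀ x, 0 < r x)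
    (hq : LocallyIntegrable q volume) (t : ℝ) :
    ∃ δ : ℝ, 0 < δ ∧ δ ≤ 1 ∧ (∀ x ∈ Icc (t - δ) t, r x ≤ 2 * r t) ∧
      (∫ x in (t - δ)..t, q x / r x) ≤ 1 / 2 := by
  have hrne : ∀ x : ℝ, r x ≠ 0 := fun x => (hrpos x).ne'
  have hint : ∀ a b : ℝ, IntervalIntegrable (fun x => q x / r x) volume a b := by
    intro a b
    simpa [div_eq_mul_inv] using intInt_mul_cont hq (hr.inv₀ hrne) a b
  have hcont : Continuous fun s => ∫ x in t..s, q x / r x :=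
    intervalIntegral.continuous_primitive hint t
  rcases Metric.continuousAt_iff.mp hcont.continuousAt (1 / 2) (by norm_num) with ⟨η, hη, hball⟩
  rcases Metric.continuousAt_iff.mp hr.continuousAt (r t) (hrpos t) with ⟨η₂, hη₂, hball₂⟩
  refine ⟨min 1 (min (η / 2) (η₂ / 2)), by positivity, min_le_left _ _, ?_, ?_⟩
  · intro x hx
    have h1 : |x - t| < η₂ := by
      rw [abs_sub_lt_iff]
      constructor
      · linarith [hx.2]
      · have := hx.1
        have h2 : min 1 (min (η / 2) (η₂ / 2)) ≤ η₂ / 2 :=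
          (min_le_right _ _).trans (min_le_right _ _)
        linarith
    have := hball₂ (show dist x t < η₂ by rwa [Real.dist_eq])
    rw [Real.dist_eq, abs_sub_lt_iff] at this
    linarith [this.1]
  · set δ := min 1 (min (η / 2) (η₂ / 2)) with hδ
    have hδpos : 0 < δ := by positivity
    have h1 : dist (t - δ) t < η := by
      rw [Real.dist_eq]
      have h2 : δ ≤ η / 2 := (min_le_right _ _).trans (min_le_left _ _)
      rw [show t - δ - t = -δ by ring, abs_neg, abs_of_pos hδpos]
      linarith
    have := hball h1
    rw [intervalIntegral.integral_same, Real.dist_eq, sub_zero] at this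
    have h3 : (∫ x in (t - δ)..t, q x / r x) = -(∫ x in t..(t - δ), q x / r x) := by
      rw [← intervalIntegral.integral_symm]
    rw [h3]
    have := abs_lt.mp this
    linarith [this.1]

/-- Core bump construction: given points `tₙ` where `r` is very small and which
eventually leave every bounded region, correct solvability gives a solution `y` of a
suitable `L¹` right-hand side which stays `≥ 1/5` in absolute value somewhere in each
`[tₙ - 1, tₙ]`. -/
lemma bumps (hr : Continuous r) (hrpos : ∀ x, 0 < r x)
    (hq : LocallyIntegrable q volume) (hqnn : ∀ x, 0 ≤ q x)
    (hcs : CorrectlySolvableLp r q 1) (t : ℕ → ℝ)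
    (hrt : ∀ n, r (t n) < (1 / 2) ^ n)
    (hfar : ∀ x : ℝ, ∃ N : ℕ, ∀ n, N ≤ n → x ∉ Icc (t n - 1) (t n)) :
    ∃ y : ℝ → ℝ, Tendsto y atBot (nhds 0) ∧ Tendsto y atTop (nhds 0) ∧
      ∀ n, ∃ x ∈ Icc (t n - 1) (t n), 1 / 5 ≤ |y x| := by
  have hrne : ∀ x : ℝ, r x ≠ 0 := fun x => (hrpos x).ne'
  choose δ hδ0 hδ1 hδr hδq using fun n => delta_choice hr hrpos hq (t n)
  set I : ℕ → Set ℝ := fun n => Icc (t n - δ n) (t n) with hI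
  set c : ℕ → ℝ := fun n => r (t n) / δ n with hc
  have hc0 : ∀ n, 0 < c n := fun n => div_pos (hrpos _) (hδ0 n)
  have hIsub : ∀ n, I n ⊆ Icc (t n - 1) (t n) :=
    fun n => Icc_subset_Icc (by linarith [hδ1 n]) le_rfl
  set b : ℕ → ℝ → ℝ := fun n => (I n).indicator (fun _ => c n) with hb
  have hbnn : ∀ n x, 0 ≤ b n x := fun n x => Set.indicator_nonneg (fun _ _ => (hc0 n).le) x
  have hsumm : ∀ x, Summable fun n => b n x := by
    intro x
    obtain ⟨N, hN⟩ := hfar x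
    apply summable_of_ne_finset_zero (s := Finset.range N)
    intro n hn
    have hn' : N ≤ n := Nat.le_of_not_lt (fun h => hn (Finset.mem_range.mpr h))
    have : x ∉ I n := fun hx => hN n hn' (hIsub n hx)
    simp [hb, Set.indicator_of_notMem this]
  set F : ℝ → ℝ := fun x => ∑' n, b n x with hF
  have hFnn : ∀ x, 0 ≤ F x := fun x => tsum_nonneg (fun n => hbnn n x)
  have hFge : ∀ n x, b n x ≤ F x := fun n x => Summable.le_tsum (hsumm x) n (fun m _ => hbnn m x)
  have hbmeas : ∀ n, Measurable (b n) := fun n =>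
    (measurable_const.indicator measurableSet_Icc)
  have hmeas : Measurable F := by
    apply measurable_of_tendsto_metrizable
      (f := fun N x => ∑ n ∈ Finset.range N, b n x)
    · intro N
      exact Finset.measurable_sum _ fun n _ => hbmeas n
    · rw [tendsto_pi_nhds]
      intro x
      exact (hsumm x).hasSum.tendsto_sum_nat
  have hofReal : ∀ n x, ENNReal.ofReal (b n x) = (I n).indicator (fun _ => ENNReal.ofReal (c n)) x := by
    intro n x
    by_cases hx : x ∈ I n <;>
      simp [hb, Set.indicator_of_mem, Set.indicator_of_notMem, hx]
  have hFint : Integrable F volume := by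
    refine ⟨hmeas.aestronglyMeasurable, ?_⟩
    rw [hasFiniteIntegral_iff_norm]
    calc (∫⁻ x, ENNReal.ofReal ‖F x‖)
        = ∫⁻ x, ∑' n, ENNReal.ofReal (b n x) := by
          apply lintegral_congr
          intro x
          rw [Real.norm_eq_abs, abs_of_nonneg (hFnn x),
            ENNReal.ofReal_tsum_of_nonneg (fun n => hbnn n x) (hsumm x)]
      _ = ∑' n, ∫⁻ x, ENNReal.ofReal (b n x) :=
          lintegral_tsum fun n => ((hbmeas n).ennreal_ofReal).aemeasurable
      _ = ∑' n, ENNReal.ofReal (r (t n)) := by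
          congr 1
          funext n
          rw [lintegral_congr (hofReal n), lintegral_indicator measurableSet_Icc]
          rw [setLIntegral_const, Real.volume_Icc, show t n - (t n - δ n) = δ n by ring,
            ← ENNReal.ofReal_mul (hc0 n).le]
          congr 1
          show r (t n) / δ n * δ n = r (t n)
          exact div_mul_cancel₀ _ (hδ0 n).ne'
      _ ≤ ∑' n, ENNReal.ofReal ((1 / 2 : ℝ) ^ n) :=
          ENNReal.tsum_le_tsum fun n => ENNReal.ofReal_le_ofReal (hrt n).le
      _ = ENNReal.ofReal (∑' n, (1 / 2 : ℝ) ^ n) :=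
          (ENNReal.ofReal_tsum_of_nonneg (fun n => by positivity) summable_geometric_two).symm
      _ < ⊤ := ENNReal.ofReal_lt_top
  have hFmem : MemLp F 1 volume := memLp_one_iff_integrable.mpr hFint
  obtain ⟨C, _, _, hC⟩ := hcs
  obtain ⟨⟨y, ⟨hsol, _⟩, _⟩, _⟩ := hC F hFmem
  obtain ⟨hycont, hid, hybot, hytop⟩ := hsol
  refine ⟨y, hybot, hytop, fun n => ?_⟩
  have hab : t n - δ n ≤ t n := by linarith [hδ0 n]
  by_cases hcase : ∀ x ∈ Icc (t n - δ n) (t n), y x ≤ 1 / 5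
  · -- then y (t n) ≤ -1/5
    have hsplit := identity_split hr hrpos hq hycont hFint hid (t n - δ n) (t n)
    have hIq : (∫ x in (t n - δ n)..(t n), q x * (y x / r x)) ≤ 1 / 10 := by
      have h1 : (∫ x in (t n - δ n)..(t n), q x * (y x / r x)) ≤
          ∫ x in (t n - δ n)..(t n), q x * ((1 / 5) / r x) := by
        have hyr : Continuous fun t => y t / r t := by exact hycont.div hr hrne
        have h15 : Continuous fun t : ℝ => (1 / 5 : ℝ) / r t := by
          exact continuous_const.div hr hrne
        apply intervalIntegral.integral_mono_on hab
          (intInt_mul_cont hq hyr _ _) (intInt_mul_cont hq h15 _ _)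
        intro x hx
        have h5 := hcase x hx
        have hrx := hrpos x
        show q x * (y x / r x) ≤ q x * (1 / 5 / r x)
        apply mul_le_mul_of_nonneg_left _ (hqnn x)
        gcongr
      have h2 : (∫ x in (t n - δ n)..(t n), q x * ((1 / 5) / r x)) =
          (1 / 5) * ∫ x in (t n - δ n)..(t n), q x / r x := by
        rw [← intervalIntegral.integral_const_mul]
        apply intervalIntegral.integral_congr
        intro x _
        show q x * (1 / 5 / r x) = 1 / 5 * (q x / r x)
        ring
      have h3 := hδq n
      calc (∫ x in (t n - δ n)..(t n), q x * (y x / r x)) ≤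
          (1 / 5) * ∫ x in (t n - δ n)..(t n), q x / r x := by rw [← h2]; exact h1
        _ ≤ (1 / 5) * (1 / 2) := by
            apply mul_le_mul_of_nonneg_left h3 (by norm_num)
        _ = 1 / 10 := by norm_num
    have hrinv : Continuous fun x => (r x)⁻¹ := hr.inv₀ hrne
    have hIf : (1 : ℝ) / 2 ≤ ∫ x in (t n - δ n)..(t n), F x * (r x)⁻¹ := by
      have hcc1 : Continuous fun x => c n * (r x)⁻¹ := continuous_const.mul hrinv
      have hcc2 : Continuous fun _ : ℝ => c n * (2 * r (t n))⁻¹ := continuous_const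
      have hb1 : (∫ x in (t n - δ n)..(t n), c n * (r x)⁻¹) ≤
          ∫ x in (t n - δ n)..(t n), F x * (r x)⁻¹ := by
        apply intervalIntegral.integral_mono_on hab (hcc1.intervalIntegrable _ _)
          (intInt_int_mul_cont hFint hrinv _ _)
        intro x hx
        show c n * (r x)⁻¹ ≤ F x * (r x)⁻¹
        apply mul_le_mul_of_nonneg_right _ (inv_nonneg.mpr (hrpos x).le)
        calc c n = b n x := by rw [hb]; simp [Set.indicator_of_mem, hx, hI]
          _ ≤ F x := hFge n x
      have hb2 : (∫ x in (t n - δ n)..(t n), c n * (2 * r (t n))⁻¹) ≤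
          ∫ x in (t n - δ n)..(t n), c n * (r x)⁻¹ := by
        apply intervalIntegral.integral_mono_on hab (hcc2.intervalIntegrable _ _)
          (hcc1.intervalIntegrable _ _)
        intro x hx
        have h1 : r x ≤ 2 * r (t n) := hδr n x hx
        have hrx := hrpos x
        show c n * (2 * r (t n))⁻¹ ≤ c n * (r x)⁻¹
        apply mul_le_mul_of_nonneg_left _ (hc0 n).le
        gcongr
      have hval : (∫ x in (t n - δ n)..(t n), c n * (2 * r (t n))⁻¹) = 1 / 2 := by
        rw [intervalIntegral.integral_const, smul_eq_mul,
          show t n - (t n - δ n) = δ n by ring]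
        have h1 : δ n ≠ 0 := (hδ0 n).ne'
        have h2 : r (t n) ≠ 0 := hrne (t n)
        show δ n * (r (t n) / δ n * (2 * r (t n))⁻¹) = 1 / 2
        field_simp
      linarith
    have hya : y (t n - δ n) ≤ 1 / 5 := hcase _ ⟨le_rfl, hab⟩
    have hyb : y (t n) ≤ -(1 / 5) := by
      have := hsplit
      linarith
    exact ⟨t n, ⟨by linarith, le_rfl⟩, by
      rw [abs_of_nonpos (by linarith)]; linarith⟩
  · push_neg at hcase
    obtain ⟨x, hx, hxy⟩ := hcase
    exact ⟨x, hIsub n hx, hxy.le.trans (le_abs_self _)⟩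

/-- Correct solvability in `L₁` forces `inf r > 0`. -/
lemma rpos (hr : Continuous r) (hrpos : ∀ x, 0 < r x)
    (hq : LocallyIntegrable q volume) (hqnn : ∀ x, 0 ≤ q x)
    (hcs : CorrectlySolvableLp r q 1) : 0 < ⨅ x, r x := by
  by_contra h
  have h0 : (⨅ x, r x) = 0 :=
    le_antisymm (not_lt.mp h) (le_ciInf fun x => (hrpos x).le)
  have hsmall : ∀ ε : ℝ, 0 < ε → ∃ t, r t < ε := by
    intro ε hε
    exact exists_lt_of_ciInf_lt (show (⨅ x, r x) < ε by rw [h0]; exact hε)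
  -- dichotomy: arbitrarily small values of r occur arbitrarily far right or far left
  have hdi : (∀ C : ℝ, ∀ ε, 0 < ε → ∃ t, C < t ∧ r t < ε) ∨
      (∀ C : ℝ, ∀ ε, 0 < ε → ∃ t, t < C ∧ r t < ε) := by
    by_cases hA : ∀ C : ℝ, ∀ ε, 0 < ε → ∃ t, C < t ∧ r t < ε
    · exact Or.inl hA
    · right
      push_neg at hA
      obtain ⟨C₀, ε₀, hε₀, h₀⟩ := hA
      intro C ε hε
      have hnem : (Icc (min C C₀) C₀).Nonempty := nonempty_Icc.mpr (min_le_right _ _)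
      obtain ⟨x₀, hx₀mem, hx₀min⟩ := isCompact_Icc.exists_isMinOn hnem hr.continuousOn
      obtain ⟨s, hs⟩ := hsmall (min ε (min ε₀ (r x₀)))
        (lt_min hε (lt_min hε₀ (hrpos x₀)))
      refine ⟨s, ?_, lt_of_lt_of_le hs (min_le_left _ _)⟩
      by_contra hsC
      push_neg at hsC
      rcases le_or_gt s C₀ with h1 | h1
      · have hmem : s ∈ Icc (min C C₀) C₀ := ⟨le_trans (min_le_left _ _) hsC, h1⟩
        have h2 : r x₀ ≤ r s := hx₀min hmem
        have h3 : r s < r x₀ :=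
          lt_of_lt_of_le hs (le_trans (min_le_right _ _) (min_le_right _ _))
        linarith
      · have h2 := h₀ s h1
        have h3 : r s < ε₀ :=
          lt_of_lt_of_le hs (le_trans (min_le_right _ _) (min_le_left _ _))
        linarith
  rcases hdi with hA | hA
  · have hex : ∀ n : ℕ, ∃ tt : ℝ, (n : ℝ) < tt ∧ r tt < (1 / 2) ^ n := fun n =>
      hA n _ (by positivity)
    choose t ht1 ht2 using hex
    have hfar : ∀ x : ℝ, ∃ N : ℕ, ∀ n, N ≤ n → x ∉ Icc (t n - 1) (t n) := by
      intro x
      obtain ⟨N, hN⟩ := exists_nat_gt (x + 1)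
      refine ⟨N, fun n hn hmem => ?_⟩
      have h1 : (N : ℝ) ≤ n := Nat.cast_le.mpr hn
      have h2 := ht1 n
      have h3 := hmem.1
      linarith
    obtain ⟨y, _, hytop, hbump⟩ := bumps hr hrpos hq hqnn hcs t ht2 hfar
    have h5 : ∀ᶠ x : ℝ in atTop, |y x| < 1 / 5 := by
      have := Metric.tendsto_nhds.mp hytop (1 / 5) (by norm_num)
      simpa [Real.dist_eq] using this
    obtain ⟨X, hX⟩ := eventually_atTop.mp h5
    obtain ⟨N, hN⟩ := exists_nat_gt (X + 1)
    obtain ⟨x, hxmem, hx5⟩ := hbump N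
    have hxX : X ≤ x := by
      have h1 := ht1 N
      have h2 := hxmem.1
      linarith
    exact absurd (hX x hxX) (not_lt.mpr hx5)
  · have hex : ∀ n : ℕ, ∃ tt : ℝ, tt < -(n : ℝ) ∧ r tt < (1 / 2) ^ n := fun n =>
      hA (-(n : ℝ)) _ (by positivity)
    choose t ht1 ht2 using hex
    have hfar : ∀ x : ℝ, ∃ N : ℕ, ∀ n, N ≤ n → x ∉ Icc (t n - 1) (t n) := by
      intro x
      obtain ⟨N, hN⟩ := exists_nat_gt (-x)
      refine ⟨N, fun n hn hmem => ?_⟩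
      have h1 : (N : ℝ) ≤ n := Nat.cast_le.mpr hn
      have h2 := ht1 n
      have h3 := hmem.2
      linarith
    obtain ⟨y, hybot, _, hbump⟩ := bumps hr hrpos hq hqnn hcs t ht2 hfar
    have h5 : ∀ᶠ x : ℝ in atBot, |y x| < 1 / 5 := by
      have := Metric.tendsto_nhds.mp hybot (1 / 5) (by norm_num)
      simpa [Real.dist_eq] using this
    obtain ⟨X, hX⟩ := eventually_atBot.mp h5
    obtain ⟨N, hN⟩ := exists_nat_gt (-X)
    obtain ⟨x, hxmem, hx5⟩ := hbump N
    have hxX : x ≤ X := by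
      have h1 := ht1 N
      have h2 := hxmem.2
      linarith
    exact absurd (hX x hxX) (not_lt.mpr hx5)

/-- Monotone exhaustion of an open set from above by points where `y` tends to `0`. -/
lemma exhaust_above (hy : Continuous y) (hytop : Tendsto y atTop (nhds 0))
    {c : Set ℝ} (hco : IsOpen c) {x₀ : ℝ} (hx₀ : x₀ ∈ c)
    (hmax : ∀ x ∈ closure c, y x ≠ 0 → x ∈ c) :
    ∃ v : ℕ → ℝ, Monotone v ∧ (∀ n, v n ∈ c) ∧ (∀ n, x₀ ≤ v n) ∧
      (∀ x ∈ c, ∃ n, x ≤ v n) ∧ Tendsto (fun n => y (v n)) atTop (nhds 0) := by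
  by_cases hbdd : BddAbove c
  · set s := sSup c with hs
    have hsc : s ∉ c := by
      intro hsmem
      obtain ⟨ε, hε, hball⟩ := Metric.isOpen_iff.mp hco s hsmem
      have hmem : s + ε / 2 ∈ c := by
        apply hball
        rw [Metric.mem_ball, Real.dist_eq]
        rw [show s + ε / 2 - s = ε / 2 by ring, abs_of_pos (by linarith)]
        linarith
      have := le_csSup hbdd hmem
      linarith
    have hzex : ∀ n : ℕ, ∃ z ∈ c, s - 1 / ((n : ℝ) + 1) < z := by
      intro n
      apply exists_lt_of_lt_csSup ⟨x₀, hx₀⟩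
      have : 0 < 1 / ((n : ℝ) + 1) := by positivity
      linarith
    choose z hz1 hz2 using hzex
    set z' : ℕ → ℝ := fun n => max (z n) x₀ with hz'
    have hz'c : ∀ n, z' n ∈ c := by
      intro n
      rcases le_total (z n) x₀ with h | h
      · rw [hz']; simp only [max_eq_right h]; exact hx₀
      · rw [hz']; simp only [max_eq_left h]; exact hz1 n
    have hrange : ∀ n : ℕ, (Finset.range (n + 1)).Nonempty := fun n =>
      ⟨0, Finset.mem_range.mpr (Nat.succ_pos n)⟩
    set v : ℕ → ℝ := fun n => (Finset.range (n + 1)).sup' (hrange n) z' with hv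
    have hvc : ∀ n, v n ∈ c := by
      intro n
      obtain ⟨i, _, hev⟩ := Finset.exists_mem_eq_sup' (hrange n) z'
      rw [hv]; simp only []; rw [hev]; exact hz'c i
    have hmono : Monotone v := by
      intro m n hmn
      exact Finset.sup'_mono z' (Finset.range_subset_range.mpr (by omega)) (hrange m)
    have hself : ∀ n : ℕ, z' n ≤ v n := fun n =>
      Finset.le_sup' z' (Finset.mem_range.mpr (Nat.lt_succ_self n))
    have hvx₀ : ∀ n, x₀ ≤ v n := fun n => le_trans (le_max_right _ _) (hself n)
    have hvs : ∀ n : ℕ, v n ≤ s := fun n =>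
      Finset.sup'_le _ _ fun i _ => le_csSup hbdd (hz'c i)
    have hvlb : ∀ n : ℕ, s - 1 / ((n : ℝ) + 1) < v n := fun n =>
      lt_of_lt_of_le (lt_of_lt_of_le (hz2 n) (le_max_left _ _)) (hself n)
    have hvtend : Tendsto v atTop (nhds s) := by
      apply tendsto_of_tendsto_of_tendsto_of_le_of_le
        (g := fun n : ℕ => s - 1 / ((n : ℝ) + 1)) (h := fun _ : ℕ => s)
      · simpa using (tendsto_const_nhds (x := s)).sub tendsto_one_div_add_atTop_nhds_zero_nat
      · exact tendsto_const_nhds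
      · exact fun n => (hvlb n).le
      · exact hvs
    have hscl : s ∈ closure c :=
      mem_closure_of_tendsto hvtend (Eventually.of_forall hvc)
    have hys : y s = 0 := by
      by_contra hne
      exact hsc (hmax s hscl hne)
    refine ⟨v, hmono, hvc, hvx₀, ?_, ?_⟩
    · intro x hx
      have hxs : x < s := lt_of_le_of_ne (le_csSup hbdd hx) (fun h => hsc (h ▸ hx))
      obtain ⟨n, hn⟩ := exists_nat_one_div_lt (sub_pos.mpr hxs)
      refine ⟨n, ?_⟩
      have := hvlb n
      linarith
    · have h := (hy.tendsto s).comp hvtend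
      rwa [hys] at h
  · have hzex : ∀ n : ℕ, ∃ z ∈ c, max (n : ℝ) x₀ < z := by
      intro n
      rcases not_bddAbove_iff.mp hbdd (max (n : ℝ) x₀) with ⟨zz, hzc, hzgt⟩
      exact ⟨zz, hzc, hzgt⟩
    choose z hz1 hz2 using hzex
    have hrange : ∀ n : ℕ, (Finset.range (n + 1)).Nonempty := fun n =>
      ⟨0, Finset.mem_range.mpr (Nat.succ_pos n)⟩
    set v : ℕ → ℝ := fun n => (Finset.range (n + 1)).sup' (hrange n) z with hv
    have hvc : ∀ n, v n ∈ c := by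
      intro n
      obtain ⟨i, _, hev⟩ := Finset.exists_mem_eq_sup' (hrange n) z
      rw [hv]; simp only []; rw [hev]; exact hz1 i
    have hmono : Monotone v := by
      intro m n hmn
      exact Finset.sup'_mono z (Finset.range_subset_range.mpr (by omega)) (hrange m)
    have hself : ∀ n : ℕ, z n ≤ v n := fun n =>
      Finset.le_sup' z (Finset.mem_range.mpr (Nat.lt_succ_self n))
    have hvgt : ∀ n : ℕ, (n : ℝ) < v n := fun n =>
      lt_of_lt_of_le (lt_of_le_of_lt (le_max_left _ _) (hz2 n)) (hself n)
    have hvx₀ : ∀ n : ℕ, x₀ ≤ v n := fun n =>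
      le_trans (le_of_lt (lt_of_le_of_lt (le_max_right _ _) (hz2 n))) (hself n)
    have hvtop : Tendsto v atTop atTop :=
      tendsto_atTop_mono (fun n => (hvgt n).le) tendsto_natCast_atTop_atTop
    refine ⟨v, hmono, hvc, hvx₀, ?_, ?_⟩
    · intro x _
      obtain ⟨n, hn⟩ := exists_nat_gt x
      exact ⟨n, (hn.trans (hvgt n)).le⟩
    · exact hytop.comp hvtop

/-- Monotone exhaustion of an open set from below. -/
lemma exhaust_below (hy : Continuous y) (hybot : Tendsto y atBot (nhds 0))
    {c : Set ℝ} (hco : IsOpen c) {x₀ : ℝ} (hx₀ : x₀ ∈ c)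
    (hmax : ∀ x ∈ closure c, y x ≠ 0 → x ∈ c) :
    ∃ u : ℕ → ℝ, Antitone u ∧ (∀ n, u n ∈ c) ∧ (∀ n, u n ≤ x₀) ∧
      (∀ x ∈ c, ∃ n, u n ≤ x) ∧ Tendsto (fun n => y (u n)) atTop (nhds 0) := by
  -- apply `exhaust_above` to the reflected set
  have hyneg : Continuous fun x : ℝ => y (-x) := hy.comp continuous_neg
  have hytop : Tendsto (fun x : ℝ => y (-x)) atTop (nhds 0) :=
    hybot.comp tendsto_neg_atTop_atBot
  have hco' : IsOpen ((fun x : ℝ => -x) ⁻¹' c) := hco.preimage continuous_neg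
  have hx₀' : -x₀ ∈ (fun x : ℝ => -x) ⁻¹' c := by simpa using hx₀
  have hmax' : ∀ x ∈ closure ((fun x : ℝ => -x) ⁻¹' c), y (-x) ≠ 0 →
      x ∈ (fun x : ℝ => -x) ⁻¹' c := by
    intro x hx hne
    have hxcl : -x ∈ closure c :=
      map_mem_closure continuous_neg hx (fun z hz => hz)
    exact hmax (-x) hxcl hne
  obtain ⟨v, hmono, hvc, hvx₀, hcov, htend⟩ :=
    exhaust_above hyneg hytop hco' hx₀' hmax'
  refine ⟨fun n => -(v n), fun m n hmn => neg_le_neg (hmono hmn), fun n => hvc n,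
    fun n => ?_, ?_, by simpa using htend⟩
  · show -(v n) ≤ x₀
    linarith [hvx₀ n]
  · intro x hx
    obtain ⟨n, hn⟩ := hcov (-x) (by simpa using hx)
    refine ⟨n, ?_⟩
    show -(v n) ≤ x
    linarith

/-- Per-component estimate: on a connected component of `{y ≠ 0}`,
`∫ (q/r)|y| ≤ ∫ |f|/r`. -/
lemma comp_bound (hr : Continuous r) (hrpos : ∀ x, 0 < r x)
    (hq : LocallyIntegrable q volume) (hqnn : ∀ x, 0 ≤ q x)
    (hf : Integrable f volume) (hy : Continuous y)
    (hid : ∀ a b : ℝ, y b - y a = ∫ t in a..b, (q t * y t - f t) / r t)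
    (hybot : Tendsto y atBot (nhds 0)) (hytop : Tendsto y atTop (nhds 0))
    {c : Set ℝ} (hco : IsOpen c) (hcc : IsPreconnected c) (hne : c.Nonempty)
    (hcne : ∀ x ∈ c, y x ≠ 0)
    (hmax : ∀ x ∈ closure c, y x ≠ 0 → x ∈ c) :
    volume.withDensity (fun x => ENNReal.ofReal (q x * (|y x| / r x))) c ≤
      volume.withDensity (fun x => ENNReal.ofReal (|f x| * (r x)⁻¹)) c := by
  have hrne : ∀ x : ℝ, r x ≠ 0 := fun x => (hrpos x).ne'
  set ν := volume.withDensity (fun x => ENNReal.ofReal (q x * (|y x| / r x))) with hν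
  set ρ := volume.withDensity (fun x => ENNReal.ofReal (|f x| * (r x)⁻¹)) with hρ
  -- constant sign on c
  obtain ⟨σ, hσ1, hσs⟩ : ∃ σ : ℝ, (σ = 1 ∨ σ = -1) ∧ ∀ x ∈ c, |y x| = σ * y x := by
    by_cases hp : ∀ x ∈ c, 0 < y x
    · exact ⟨1, Or.inl rfl, fun x hx => by rw [abs_of_pos (hp x hx), one_mul]⟩
    · push_neg at hp
      obtain ⟨x₁, hx₁c, hx₁⟩ := hp
      have hx₁n : y x₁ < 0 := lt_of_le_of_ne hx₁ (hcne x₁ hx₁c)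
      refine ⟨-1, Or.inr rfl, fun x hx => ?_⟩
      have hneg : y x < 0 := by
        by_contra hge
        push_neg at hge
        have h0mem : (0 : ℝ) ∈ uIcc (y x₁) (y x) := by
          rw [Set.mem_uIcc]
          exact Or.inl ⟨hx₁n.le, hge⟩
        obtain ⟨zp, hzp, hyz⟩ := intermediate_value_uIcc hy.continuousOn h0mem
        have hzpc : zp ∈ c := (hcc.ordConnected.uIcc_subset hx₁c hx) hzp
        exact hcne zp hzpc hyz
      rw [abs_of_neg hneg]; ring
  obtain ⟨x₀, hx₀⟩ := hne
  obtain ⟨v, hvmono, hvc, hvx₀, hvcov, hvtend⟩ := exhaust_above hy hytop hco hx₀ hmax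
  obtain ⟨u, humono, huc, hux₀, hucov, hutend⟩ := exhaust_below hy hybot hco hx₀ hmax
  set K : ℕ → Set ℝ := fun n => Icc (u n) (v n) with hK
  have hKsub : ∀ n, K n ⊆ c := fun n => hcc.ordConnected.out (huc n) (hvc n)
  have hKmono : Monotone K := fun m n h =>
    Icc_subset_Icc (humono h) (hvmono h)
  have hcov : (⋃ n, K n) = c := by
    apply subset_antisymm
    · exact iUnion_subset hKsub
    · intro x hx
      obtain ⟨n, hn⟩ := hvcov x hx
      obtain ⟨m, hm⟩ := hucov x hx
      refine mem_iUnion.mpr ⟨max n m, ?_, ?_⟩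
      · exact le_trans (humono (le_max_right n m)) hm
      · exact le_trans hn (hvmono (le_max_left n m))
  have hνc : ν c = ⨆ n, ν (K n) := by
    rw [← hcov]
    exact (hKmono.directed_le).measure_iUnion
  have hKb : ∀ n, ν (K n) ≤ ENNReal.ofReal (|y (u n)| + |y (v n)|) + ρ c := by
    intro n
    have hab : u n ≤ v n := le_trans (hux₀ n) (hvx₀ n)
    have hrinv : Continuous fun x => (r x)⁻¹ := hr.inv₀ hrne
    have hGcont : Continuous fun x => |y x| / r x := by exact (hy.abs).div hr hrne
    have hG : IntegrableOn (fun x => q x * (|y x| / r x)) (Icc (u n) (v n)) volume :=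
      (hq.integrableOn_isCompact isCompact_Icc).mul_continuousOn hGcont.continuousOn
        isCompact_Icc
    have e1 : ν (K n) = ENNReal.ofReal (∫ x in (u n)..(v n), q x * (|y x| / r x)) := by
      rw [hν, withDensity_apply _ measurableSet_Icc, intervalIntegral.integral_of_le hab,
        ← integral_Icc_eq_integral_Ioc]
      exact (ofReal_integral_eq_lintegral_ofReal hG
        (ae_of_all _ fun x =>
          mul_nonneg (hqnn x) (div_nonneg (abs_nonneg _) (hrpos x).le))).symm
    have hyr : Continuous fun t => y t / r t := by exact hy.div hr hrne
    have hIy : IntervalIntegrable (fun x => q x * (y x / r x)) volume (u n) (v n) :=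
      intInt_mul_cont hq hyr _ _
    have hsplit : (∫ x in (u n)..(v n), q x * (y x / r x)) =
        (y (v n) - y (u n)) + ∫ x in (u n)..(v n), f x * (r x)⁻¹ := by
      have := identity_split hr hrpos hq hy hf hid (u n) (v n)
      linarith
    have hcongr : (∫ x in (u n)..(v n), q x * (|y x| / r x)) =
        σ * ∫ x in (u n)..(v n), q x * (y x / r x) := by
      rw [← intervalIntegral.integral_const_mul]
      apply intervalIntegral.integral_congr
      intro x hx
      have hxc : x ∈ c := hKsub n (by rwa [uIcc_of_le hab] at hx)
      show q x * (|y x| / r x) = σ * (q x * (y x / r x))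
      rw [hσs x hxc]
      ring
    have habs : σ * (y (v n) - y (u n)) ≤ |y (u n)| + |y (v n)| := by
      have h1 : σ * (y (v n) - y (u n)) ≤ |y (v n) - y (u n)| := by
        rcases hσ1 with h | h <;> rw [h]
        · rw [one_mul]; exact le_abs_self _
        · rw [neg_one_mul]; exact neg_le_abs _
      have h2 := abs_sub (y (v n)) (y (u n))
      linarith [add_comm (|y (v n)|) (|y (u n)|)]
    have hfa : σ * (∫ x in (u n)..(v n), f x * (r x)⁻¹) ≤
        ∫ x in (u n)..(v n), |f x| * (r x)⁻¹ := by
      have h1 : σ * (∫ x in (u n)..(v n), f x * (r x)⁻¹) ≤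
          |∫ x in (u n)..(v n), f x * (r x)⁻¹| := by
        rcases hσ1 with h | h <;> rw [h]
        · rw [one_mul]; exact le_abs_self _
        · rw [neg_one_mul]; exact neg_le_abs _
      have h2 : |∫ x in (u n)..(v n), f x * (r x)⁻¹| ≤
          ∫ x in (u n)..(v n), |f x * (r x)⁻¹| :=
        intervalIntegral.abs_integral_le_integral_abs hab
      have h3 : (∫ x in (u n)..(v n), |f x * (r x)⁻¹|) =
          ∫ x in (u n)..(v n), |f x| * (r x)⁻¹ := by
        apply intervalIntegral.integral_congr
        intro x _
        show |f x * (r x)⁻¹| = |f x| * (r x)⁻¹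
        rw [abs_mul, abs_inv, abs_of_pos (hrpos x)]
      linarith
    have hreal : (∫ x in (u n)..(v n), q x * (|y x| / r x)) ≤
        (|y (u n)| + |y (v n)|) + ∫ x in (u n)..(v n), |f x| * (r x)⁻¹ := by
      rw [hcongr, hsplit, mul_add]
      exact add_le_add habs hfa
    have hIfabs : IntegrableOn (fun x => |f x| * (r x)⁻¹) (Icc (u n) (v n)) volume :=
      (hf.abs.integrableOn.mul_continuousOn hrinv.continuousOn isCompact_Icc)
    have hρb : ENNReal.ofReal (∫ x in (u n)..(v n), |f x| * (r x)⁻¹) ≤ ρ c := by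
      rw [intervalIntegral.integral_of_le hab, ← integral_Icc_eq_integral_Ioc,
        ofReal_integral_eq_lintegral_ofReal hIfabs
          (ae_of_all _ fun x => mul_nonneg (abs_nonneg _) (inv_nonneg.mpr (hrpos x).le)),
        hρ, ← withDensity_apply _ measurableSet_Icc]
      exact measure_mono (hKsub n)
    calc ν (K n) = ENNReal.ofReal (∫ x in (u n)..(v n), q x * (|y x| / r x)) := e1
      _ ≤ ENNReal.ofReal ((|y (u n)| + |y (v n)|) +
          ∫ x in (u n)..(v n), |f x| * (r x)⁻¹) := ENNReal.ofReal_le_ofReal hreal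
      _ ≤ ENNReal.ofReal (|y (u n)| + |y (v n)|) +
          ENNReal.ofReal (∫ x in (u n)..(v n), |f x| * (r x)⁻¹) := ENNReal.ofReal_add_le
      _ ≤ ENNReal.ofReal (|y (u n)| + |y (v n)|) + ρ c := add_le_add_right hρb _
  rw [hνc]
  apply ENNReal.le_of_forall_pos_le_add
  intro ε hε _
  have hT : Tendsto (fun n => |y (u n)| + |y (v n)|) atTop (nhds 0) := by
    have := (hutend.abs.add hvtend.abs)
    simpa using this
  have hev : ∀ᶠ n in atTop, |y (u n)| + |y (v n)| < (ε : ℝ) := by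
    apply hT.eventually_lt_const
    exact_mod_cast hε
  obtain ⟨N, hN⟩ := eventually_atTop.mp hev
  apply iSup_le
  intro m
  calc ν (K m) ≤ ν (K (max m N)) := measure_mono (hKmono (le_max_left m N))
    _ ≤ ENNReal.ofReal (|y (u (max m N))| + |y (v (max m N))|) + ρ c := hKb _
    _ ≤ ENNReal.ofReal (ε : ℝ) + ρ c := by
        apply add_le_add_left
        exact ENNReal.ofReal_le_ofReal (hN _ (le_max_right m N)).le
    _ = ρ c + ε := by rw [add_comm, ENNReal.ofReal_coe_nnreal]

/-- The key estimate: `∫ (q/r)|y| ≤ ∫ |f|/r`. -/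
lemma key_c (hr : Continuous r) (hrpos : ∀ x, 0 < r x)
    (hq : LocallyIntegrable q volume) (hqnn : ∀ x, 0 ≤ q x)
    (hf : Integrable f volume) (hy : Continuous y)
    (hid : ∀ a b : ℝ, y b - y a = ∫ t in a..b, (q t * y t - f t) / r t)
    (hybot : Tendsto y atBot (nhds 0)) (hytop : Tendsto y atTop (nhds 0)) :
    (∫⁻ x, ENNReal.ofReal (q x * (|y x| / r x))) ≤
      ∫⁻ x, ENNReal.ofReal (|f x| * (r x)⁻¹) := by
  set ν := volume.withDensity (fun x => ENNReal.ofReal (q x * (|y x| / r x))) with hν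
  set ρ := volume.withDensity (fun x => ENNReal.ofReal (|f x| * (r x)⁻¹)) with hρ
  set U := {x : ℝ | y x ≠ 0} with hU
  have hUopen : IsOpen U := by
    have : U = (y ⁻¹' {0})ᶜ := by
      ext x; simp [hU]
    rw [this]
    exact (isClosed_singleton.preimage hy).isOpen_compl
  set 𝒞 : Set (Set ℝ) := (fun x => connectedComponentIn U x) '' U with h𝒞
  have hopen𝒞 : ∀ c ∈ 𝒞, IsOpen c := by
    rintro c ⟨x, hx, rfl⟩
    exact hUopen.connectedComponentIn
  have hne𝒞 : ∀ c ∈ 𝒞, c.Nonempty := by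
    rintro c ⟨x, hx, rfl⟩
    exact ⟨x, mem_connectedComponentIn hx⟩
  have hdisj : 𝒞.PairwiseDisjoint id := by
    rintro c₁ ⟨x₁, hx₁, rfl⟩ c₂ ⟨x₂, hx₂, rfl⟩ hnee
    refine disjoint_left.mpr fun z hz1 hz2 => hnee ?_
    simp only [id] at hz1 hz2
    show connectedComponentIn U x₁ = connectedComponentIn U x₂
    exact (connectedComponentIn_eq hz1).trans (connectedComponentIn_eq hz2).symm
  have hcount : 𝒞.Countable := hdisj.countable_of_isOpen hopen𝒞 hne𝒞
  haveI := hcount.to_subtype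
  have hUeq : (⋃ c : 𝒞, (c : Set ℝ)) = U := by
    apply subset_antisymm
    · apply iUnion_subset
      rintro ⟨cc, x, hx, rfl⟩
      exact connectedComponentIn_subset U x
    · intro x hx
      exact mem_iUnion.mpr ⟨⟨connectedComponentIn U x, ⟨x, hx, rfl⟩⟩,
        mem_connectedComponentIn hx⟩
  have hmeas𝒞 : ∀ cc : 𝒞, MeasurableSet (cc : Set ℝ) := fun cc =>
    (hopen𝒞 cc cc.2).measurableSet
  have hpd : Pairwise (Function.onFun Disjoint fun cc : 𝒞 => (cc : Set ℝ)) := by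
    intro c₁ c₂ hnee
    exact hdisj c₁.2 c₂.2 (fun h => hnee (Subtype.coe_injective h))
  have hmaxgen : ∀ cc ∈ 𝒞, ∀ x ∈ closure cc, y x ≠ 0 → x ∈ cc := by
    rintro cc ⟨x₁, hx₁, rfl⟩ x hxcl hxne
    have hxU : x ∈ U := hxne
    have hcomp : IsOpen (connectedComponentIn U x) := hUopen.connectedComponentIn
    have hxmem : x ∈ connectedComponentIn U x := mem_connectedComponentIn hxU
    obtain ⟨z, hz1, hz2⟩ := (_root_.mem_closure_iff.mp hxcl) _ hcomp hxmem
    show x ∈ connectedComponentIn U x₁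
    rw [connectedComponentIn_eq hz2, ← connectedComponentIn_eq hz1]
    exact hxmem
  have hcomp : ∀ cc : 𝒞, ν cc ≤ ρ cc := by
    rintro ⟨cc, hcc⟩
    obtain ⟨x, hx, rfl⟩ := hcc
    refine comp_bound hr hrpos hq hqnn hf hy hid hybot hytop
      hUopen.connectedComponentIn isPreconnected_connectedComponentIn
      ⟨x, mem_connectedComponentIn hx⟩ ?_ ?_
    · intro z hz
      exact connectedComponentIn_subset U x hz
    · exact hmaxgen _ ⟨x, hx, rfl⟩
  have hνU : ν U = ∑' cc : 𝒞, ν cc := by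
    rw [← hUeq]
    exact measure_iUnion hpd hmeas𝒞
  have hρU : ρ U = ∑' cc : 𝒞, ρ cc := by
    rw [← hUeq]
    exact measure_iUnion hpd hmeas𝒞
  have hνcompl : ν Uᶜ = 0 := by
    rw [hν, withDensity_apply _ hUopen.measurableSet.compl]
    rw [setLIntegral_congr_fun hUopen.measurableSet.compl
      (fun x hx => ?_), lintegral_zero]
    have hyx : y x = 0 := not_not.mp (by simpa [hU] using hx)
    show ENNReal.ofReal (q x * (|y x| / r x)) = (fun _ => (0 : ℝ≥0∞)) x
    simp [hyx]
  have huniv : ∀ (μ : Measure ℝ) (g : ℝ → ℝ≥0∞), μ.withDensity g univ = ∫⁻ x, g x ∂μ := by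
    intro μ g
    rw [withDensity_apply _ MeasurableSet.univ, Measure.restrict_univ]
  calc (∫⁻ x, ENNReal.ofReal (q x * (|y x| / r x))) = ν univ := (huniv _ _).symm
    _ = ν U + ν Uᶜ := (measure_add_measure_compl hUopen.measurableSet).symm
    _ = ν U := by rw [hνcompl, add_zero]
    _ = ∑' cc : 𝒞, ν cc := hνU
    _ ≤ ∑' cc : 𝒞, ρ cc := ENNReal.tsum_le_tsum hcomp
    _ = ρ U := hρU.symm
    _ ≤ ρ univ := measure_mono (subset_univ _)
    _ = ∫⁻ x, ENNReal.ofReal (|f x| * (r x)⁻¹) := huniv _ _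

end Stmt9Aux

open Stmt9Aux in
theorem stmt9 (r q : ℝ → ℝ) (hr : Continuous r) (hrpos : ∀ x, 0 < r x)
    (hq : LocallyIntegrable q volume) (hqnn : ∀ x, 0 ≤ q x)
    (hcs : CorrectlySolvableLp r q 1) :
    ∀ f : ℝ → ℝ, MemLp f 1 volume →
      ∀ y : ℝ → ℝ, IsSolution r q f y → MemLp y 1 volume →
        eLpNorm (fun x => (q x * y x - f x) / r x) 1 volume +
            eLpNorm (fun x => (q x / r x) * y x) 1 volume ≤
          ENNReal.ofReal (3 / ⨅ x, r x) * eLpNorm f 1 volume := by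
  intro f hf y hsol hyL1
  obtain ⟨hycont, hid, hybot, hytop⟩ := hsol
  have hrne : ∀ x : ℝ, r x ≠ 0 := fun x => (hrpos x).ne'
  have hfint : Integrable f volume := memLp_one_iff_integrable.mp hf
  set R := ⨅ x, r x with hR
  have hRpos : 0 < R := rpos hr hrpos hq hqnn hcs
  have hbdd : BddBelow (Set.range r) := ⟨0, fun v ⟨x, hx⟩ => hx ▸ (hrpos x).le⟩
  have hRle : ∀ x, R ≤ r x := fun x => ciInf_le hbdd x
  -- Notation for the three lintegrals
  set Φ := ∫⁻ x, ENNReal.ofReal (|f x| * (r x)⁻¹) with hΦ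
  set N := eLpNorm f 1 volume with hN
  have hNval : N = ∫⁻ x, ENNReal.ofReal |f x| := by
    rw [hN, eLpNorm_one_eq_lintegral_enorm]
    exact lintegral_congr fun x => Real.enorm_eq_ofReal_abs (f x)
  -- (b) : Φ ≤ ofReal (1/R) * N
  have h_b : Φ ≤ ENNReal.ofReal (1 / R) * N := by
    rw [hΦ, hNval]
    calc (∫⁻ x, ENNReal.ofReal (|f x| * (r x)⁻¹)) ≤
        ∫⁻ x, ENNReal.ofReal (1 / R) * ENNReal.ofReal (|f x|) := by
          apply lintegral_mono
          intro x
          show ENNReal.ofReal (|f x| * (r x)⁻¹) ≤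
            ENNReal.ofReal (1 / R) * ENNReal.ofReal |f x|
          rw [← ENNReal.ofReal_mul (by positivity)]
          apply ENNReal.ofReal_le_ofReal
          rw [div_mul_eq_mul_div, one_mul, ← div_eq_mul_inv]
          exact div_le_div_of_nonneg_left (abs_nonneg _) hRpos (hRle x)
      _ = ENNReal.ofReal (1 / R) * ∫⁻ x, ENNReal.ofReal |f x| :=
          lintegral_const_mul' _ _ ENNReal.ofReal_ne_top
  -- (c) : B ≤ Φ
  set B := eLpNorm (fun x => (q x / r x) * y x) 1 volume with hB
  have hBval : B = ∫⁻ x, ENNReal.ofReal (q x * (|y x| / r x)) := by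
    rw [hB, eLpNorm_one_eq_lintegral_enorm]
    apply lintegral_congr
    intro x
    rw [Real.enorm_eq_ofReal_abs]
    congr 1
    rw [abs_mul, abs_of_nonneg (div_nonneg (hqnn x) (hrpos x).le),
      div_mul_eq_mul_div, mul_div_assoc]
  have h_c : B ≤ Φ := by
    rw [hBval, hΦ]
    exact key_c hr hrpos hq hqnn hfint hycont hid hybot hytop
  -- (a) : A ≤ B + Φ
  set A := eLpNorm (fun x => (q x * y x - f x) / r x) 1 volume with hA
  have hqam : AEMeasurable (fun x => ENNReal.ofReal (q x * (|y x| / r x))) volume := by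
    apply AEMeasurable.ennreal_ofReal
    apply AEMeasurable.mul hq.aestronglyMeasurable.aemeasurable
    exact ((hycont.abs).div hr hrne).measurable.aemeasurable
  have h_a : A ≤ B + Φ := by
    rw [hA, hBval, hΦ, eLpNorm_one_eq_lintegral_enorm]
    calc (∫⁻ x, ‖(q x * y x - f x) / r x‖ₑ) ≤
        ∫⁻ x, (ENNReal.ofReal (q x * (|y x| / r x)) +
          ENNReal.ofReal (|f x| * (r x)⁻¹)) := by
          apply lintegral_mono
          intro x
          show ‖(q x * y x - f x) / r x‖ₑ ≤
            ENNReal.ofReal (q x * (|y x| / r x)) + ENNReal.ofReal (|f x| * (r x)⁻¹)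
          rw [Real.enorm_eq_ofReal_abs]
          calc ENNReal.ofReal |(q x * y x - f x) / r x| ≤
              ENNReal.ofReal (q x * (|y x| / r x) + |f x| * (r x)⁻¹) := by
                apply ENNReal.ofReal_le_ofReal
                have heq : (q x * y x - f x) / r x =
                    q x * (y x / r x) - f x * (r x)⁻¹ := by
                  rw [sub_div, mul_div_assoc, div_eq_mul_inv (f x) (r x)]
                rw [heq]
                calc |q x * (y x / r x) - f x * (r x)⁻¹| ≤
                    |q x * (y x / r x)| + |f x * (r x)⁻¹| := abs_sub _ _
                  _ = q x * (|y x| / r x) + |f x| * (r x)⁻¹ := by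
                      rw [abs_mul, abs_mul, abs_inv, abs_of_pos (hrpos x),
                        abs_of_nonneg (hqnn x), abs_div, abs_of_pos (hrpos x)]
            _ ≤ _ := ENNReal.ofReal_add_le
      _ = (∫⁻ x, ENNReal.ofReal (q x * (|y x| / r x))) +
          ∫⁻ x, ENNReal.ofReal (|f x| * (r x)⁻¹) := lintegral_add_left' hqam _
  -- assemble
  have h3 : ENNReal.ofReal (3 / R) * N =
      ENNReal.ofReal (1 / R) * N + ENNReal.ofReal (1 / R) * N +
        ENNReal.ofReal (1 / R) * N := by
    rw [← add_mul, ← add_mul, ← ENNReal.ofReal_add (by positivity) (by positivity),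
      ← ENNReal.ofReal_add (by positivity) (by positivity)]
    congr 2
    field_simp
    ring
  calc A + B ≤ (B + Φ) + B := add_le_add_left h_a B
    _ ≤ (Φ + Φ) + Φ := add_le_add (add_le_add h_c le_rfl) h_c
    _ ≤ (ENNReal.ofReal (1 / R) * N + ENNReal.ofReal (1 / R) * N) +
        ENNReal.ofReal (1 / R) * N := add_le_add (add_le_add h_b h_b) h_b
    _ = ENNReal.ofReal (3 / R) * N := h3.symm
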